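/- arXiv:1210.0367 — 3 statements merged into one kernel-verified Lean document; each statement's English description precedes it below -/
import Mathlib

section
/- Let a, b, c > 0 with c = a·b and suppose a, b, c ∈ [π⁻¹, π]. Then (a² + a⁻² ) + (b² + b⁻²) + (c² + c⁻²) ≤ 2(1 + π² + π⁻²), and in particular 3 + (a²+a⁻²) + (b²+b⁻²) + (c²+c⁻²) < 25. -/
open Real

lemma aux_poly (p x y : ℝ) (hp : 1 ≤ p) (hx0 : 0 < x) (hy0 : 0 < y)
    (hx1 : 1 ≤ p * x) (hx2 : x ≤ p) (hy1 : 1 ≤ p * y) (hy2 : y ≤ p)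
    (hz1 : 1 ≤ p * (x * y)) (hz2 : x * y ≤ p) :
    p * x * y * (x + y + x * y) + p * (x + y + 1) ≤ 2 * x * y * (1 + p + p ^ 2) := by
  have hp0 : (0:ℝ) < p := lt_of_lt_of_le one_pos hp
  rcases le_total 1 (x * y) with h | h
  · nlinarith [mul_nonneg (mul_nonneg (sub_nonneg.2 h) (sub_nonneg.2 hz2)) (by linarith : (0:ℝ) ≤ 1 + p),
      mul_nonneg (mul_nonneg (sub_nonneg.2 hx2) (sub_nonneg.2 hy2)) (by nlinarith : (0:ℝ) ≤ 1 + x * y)]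
  · nlinarith [mul_nonneg (mul_nonneg (mul_nonneg (sub_nonneg.2 h) (sub_nonneg.2 hz1)) (by linarith : (0:ℝ) ≤ 1 + p)) hp0.le,
      mul_nonneg (mul_nonneg (sub_nonneg.2 hx1) (sub_nonneg.2 hy1)) (by nlinarith : (0:ℝ) ≤ 1 + x * y),
      mul_pos hx0 hy0, hp0]

lemma aux (p x y : ℝ) (hp : 1 ≤ p) (hx0 : 0 < x) (hy0 : 0 < y)
    (hx1 : p⁻¹ ≤ x) (hx2 : x ≤ p) (hy1 : p⁻¹ ≤ y) (hy2 : y ≤ p)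
    (hz1 : p⁻¹ ≤ x * y) (hz2 : x * y ≤ p) :
    x + x⁻¹ + (y + y⁻¹) + (x * y + (x * y)⁻¹) ≤ 2 * (1 + p + p⁻¹) := by
  have hp0 : (0:ℝ) < p := lt_of_lt_of_le one_pos hp
  have h1 : 1 ≤ p * x := by rw [inv_le_iff_one_le_mul₀' hp0] at hx1; linarith [hx1]
  have h2 : 1 ≤ p * y := by rw [inv_le_iff_one_le_mul₀' hp0] at hy1; linarith [hy1]
  have h3 : 1 ≤ p * (x * y) := by rw [inv_le_iff_one_le_mul₀' hp0] at hz1; linarith [hz1]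
  have key := aux_poly p x y hp hx0 hy0 h1 hx2 h2 hy2 h3 hz2
  have hpxy : (0:ℝ) < p * x * y := by positivity
  have h4 : 2 * (1 + p + p⁻¹) - (x + x⁻¹ + (y + y⁻¹) + (x * y + (x * y)⁻¹))
      = (2 * x * y * (1 + p + p ^ 2) - (p * x * y * (x + y + x * y) + p * (x + y + 1))) / (p * x * y) := by
    field_simp
    ring
  have h5 : 0 ≤ 2 * (1 + p + p⁻¹) - (x + x⁻¹ + (y + y⁻¹) + (x * y + (x * y)⁻¹)) := by
    rw [h4]
    exact div_nonneg (by linarith) hpxy.le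
  linarith

/-- Estimate (27): the key numerical inequality in the H¹-stability proof. -/
theorem stmt_1 (a b c : ℝ) (ha : 0 < a) (hb : 0 < b) (hc : 0 < c)
    (hab : c = a * b)
    (ha' : a ∈ Set.Icc π⁻¹ π) (hb' : b ∈ Set.Icc π⁻¹ π) (hc' : c ∈ Set.Icc π⁻¹ π) :
    (a ^ 2 + (a ^ 2)⁻¹) + (b ^ 2 + (b ^ 2)⁻¹) + (c ^ 2 + (c ^ 2)⁻¹)
      ≤ 2 * (1 + π ^ 2 + (π ^ 2)⁻¹) ∧
    3 + ((a ^ 2 + (a ^ 2)⁻¹) + (b ^ 2 + (b ^ 2)⁻¹) + (c ^ 2 + (c ^ 2)⁻¹)) < 25 := by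
  have hpi3 : (3:ℝ) < π := pi_gt_three
  have hp : (1:ℝ) ≤ π ^ 2 := by nlinarith
  have hpinv : (0:ℝ) < π⁻¹ := by positivity
  have sq_lb : ∀ t : ℝ, 0 < t → π⁻¹ ≤ t → (π ^ 2)⁻¹ ≤ t ^ 2 := by
    intro t ht h
    rw [← inv_pow]
    exact pow_le_pow_left₀ hpinv.le h 2
  have sq_ub : ∀ t : ℝ, 0 < t → t ≤ π → t ^ 2 ≤ π ^ 2 := by
    intro t ht h
    exact pow_le_pow_left₀ ht.le h 2
  have hcc : c ^ 2 = a ^ 2 * b ^ 2 := by rw [hab]; ring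
  have key := aux (π ^ 2) (a ^ 2) (b ^ 2) hp (by positivity) (by positivity)
    (sq_lb a ha ha'.1) (sq_ub a ha ha'.2) (sq_lb b hb hb'.1) (sq_ub b hb hb'.2)
    (hcc ▸ sq_lb c hc hc'.1) (hcc ▸ sq_ub c hc hc'.2)
  rw [← hcc] at key
  refine ⟨key, ?_⟩
  have hlt : π < 3.141593 := pi_lt_d6
  have hinv : (π ^ 2)⁻¹ ≤ 1 / 9 := by
    rw [inv_le_comm₀ (by positivity) (by norm_num)]
    nlinarith
  have : 2 * (1 + π ^ 2 + (π ^ 2)⁻¹) < 22 := by nlinarith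
  linarith
end

section
/- Let d₁, d₂, d₃ > 0 satisfy dᵢ/dⱼ ≤ π for all i, j ∈ {1,2,3}. Then the symmetric 3×3 matrix B with Bᵢᵢ = 4 and Bᵢⱼ = dᵢ/dⱼ + dⱼ/dᵢ for i ≠ j is positive definite. -/
open Real


private lemma core_ineq (X Y Z P : ℝ) (hX : 0 < X) (hY : 0 < Y) (hZ : 0 < Z)
    (hP : P ≤ 987/100) (hP1 : 1 ≤ P)
    (hXY : Y ≤ X) (hYZ : Z ≤ Y) (h : X ≤ P*Z) :
    (X+Y+Z)*(X*Y+Y*Z+Z*X) < 25*(X*Y*Z) := by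
  have c1 : 0 ≤ (X-Y)*((Y-Z)*(X+Z)) :=
    mul_nonneg (by linarith) (mul_nonneg (by linarith) (by linarith))
  have hPXZ : 0 ≤ P*X - Z := by nlinarith
  have c2 : 0 ≤ Y*((P*Z-X)*(P*X-Z)) :=
    mul_nonneg hY.le (mul_nonneg (by linarith) hPXZ)
  have c3 : (0:ℝ) < 10*P - P^2 - 1 := by nlinarith [mul_nonneg (sub_nonneg.2 hP1) (sub_nonneg.2 hP)]
  have c4 : 0 < X*Y*Z := by positivity
  nlinarith [mul_pos c3 c4, c1, c2, mul_nonneg c1 (by linarith : (0:ℝ) ≤ P)]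

private lemma cs3 (a b c x y z : ℝ) :
    (a*x+b*y+c*z)^2 ≤ (a^2+b^2+c^2)*(x^2+y^2+z^2) := by
  nlinarith [sq_nonneg (a*y-b*x), sq_nonneg (a*z-c*x), sq_nonneg (b*z-c*y)]


private lemma final_step (n p q sA sC m : ℝ) (hn : 0 < n) (hm : m = sA*sC)
    (hm3 : 3 ≤ m) (hm5 : m < 5)
    (hCS : (sC*p - sA*q)^2 ≤ (2*m^2 - 6*m)*n) : 0 < 2*n + 2*(p*q) := by
  have hm0 : (0:ℝ) < m := by linarith
  have e1 : (sC*p - sA*q)^2 = sC^2*p^2 + sA^2*q^2 - 2*m*(p*q) := by rw [hm]; ring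
  have e2 : (sC*p + sA*q)^2 = sC^2*p^2 + sA^2*q^2 + 2*m*(p*q) := by rw [hm]; ring
  have h1 : sC^2*p^2 + sA^2*q^2 - 2*m*(p*q) ≤ (2*m^2 - 6*m)*n := e1 ▸ hCS
  have h2 : 0 ≤ sC^2*p^2 + sA^2*q^2 + 2*m*(p*q) := e2 ▸ sq_nonneg _
  have h3 : -(4*m*(p*q)) ≤ (2*m^2 - 6*m)*n := by linarith
  have h4 : 0 < (2*m)*(2*n + 2*(p*q)) := by
    nlinarith [h3, mul_pos (mul_pos hm0 hn) (show (0:ℝ) < 5 - m by linarith)]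
  rcases mul_pos_iff.mp h4 with ⟨_, h⟩ | ⟨h, _⟩
  · exact h
  · linarith


set_option maxHeartbeats 1000000 in
/-- The symmetrized scaled mass matrix is positive definite when the ratios
are bounded by π. -/
theorem stmt_2 (d : Fin 3 → ℝ) (hd : ∀ i, 0 < d i)
    (hratio : ∀ i j, d i / d j ≤ π) :
    (Matrix.of fun i j : Fin 3 =>
      if i = j then (4 : ℝ) else d i / d j + d j / d i).PosDef := by
  rw [Matrix.posDef_iff_dotProduct_mulVec]
  constructor
  · rw [Matrix.IsHermitian]
    ext i j
    simp only [Matrix.conjTranspose_apply, Matrix.of_apply, star_trivial]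
    rcases eq_or_ne i j with h | h
    · simp [h]
    · simp [h, h.symm]; ring
  · intro x hx
    simp only [dotProduct, Matrix.mulVec, dotProduct, Matrix.of_apply,
      Fin.sum_univ_three, star_trivial, Pi.star_apply]
    norm_num [Fin.ext_iff]
    have ha := hd 0; have hb := hd 1; have hc := hd 2
    set a := d 0; set b := d 1; set c := d 2
    -- squared ratio bounds
    have hsq : ∀ i j : Fin 3, (d i)^2 ≤ π^2 * (d j)^2 := by
      intro i j
      have h := hratio i j
      have hj := hd j
      have h' : d i ≤ π * d j := by
        rw [div_le_iff₀ hj] at h; linarith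
      nlinarith [hd i, Real.pi_pos]
    have hP : π^2 ≤ 987/100 := by nlinarith [Real.pi_lt_d6, Real.pi_gt_d6]
    have hP1 : (1:ℝ) ≤ π^2 := by nlinarith [Real.pi_gt_d6]
    -- polynomial core: (X+Y+Z)(XY+YZ+ZX) < 25 XYZ with X = a^2 etc.
    have hX : 0 < a^2 := by positivity
    have hY : 0 < b^2 := by positivity
    have hZ : 0 < c^2 := by positivity
    have hpoly : (a^2+b^2+c^2)*(a^2*b^2+b^2*c^2+c^2*a^2) < 25*(a^2*b^2*c^2) := by
      rcases le_total (a^2) (b^2) with h1 | h1 <;> rcases le_total (b^2) (c^2) with h2 | h2 <;>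
        rcases le_total (a^2) (c^2) with h3 | h3
      · linarith [core_ineq (c^2) (b^2) (a^2) (π^2) hZ hY hX hP hP1 h2 h1 (hsq 2 0)]
      · linarith [core_ineq (c^2) (b^2) (a^2) (π^2) hZ hY hX hP hP1 h2 h1 (hsq 2 0)]
      · linarith [core_ineq (b^2) (c^2) (a^2) (π^2) hY hZ hX hP hP1 h2 h3 (hsq 1 0)]
      · linarith [core_ineq (b^2) (a^2) (c^2) (π^2) hY hX hZ hP hP1 h1 h3 (hsq 1 2)]
      · linarith [core_ineq (c^2) (a^2) (b^2) (π^2) hZ hX hY hP hP1 h3 h1 (hsq 2 1)]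
      · linarith [core_ineq (a^2) (c^2) (b^2) (π^2) hX hZ hY hP hP1 h3 h2 (hsq 0 1)]
      · linarith [core_ineq (a^2) (b^2) (c^2) (π^2) hX hY hZ hP hP1 h1 h2 (hsq 0 2)]
      · linarith [core_ineq (a^2) (b^2) (c^2) (π^2) hX hY hZ hP hP1 h1 h2 (hsq 0 2)]
    set A := a^2+b^2+c^2 with hA
    set C := 1/a^2+1/b^2+1/c^2 with hC
    have hApos : 0 < A := by positivity
    have hCpos : 0 < C := by positivity
    have hAC : A*C < 25 := by
      have habc : 0 < a^2*b^2*c^2 := by positivity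
      rw [← mul_lt_mul_iff_left₀ habc]
      have e : C * (a^2*b^2*c^2) = a^2*b^2+b^2*c^2+c^2*a^2 := by
        rw [hC]; field_simp; ring
      calc A*C*(a^2*b^2*c^2) = A * (C*(a^2*b^2*c^2)) := by ring
        _ = (a^2+b^2+c^2)*(a^2*b^2+b^2*c^2+c^2*a^2) := by rw [e, hA]
        _ < 25*(a^2*b^2*c^2) := hpoly
    have hAC9 : 9 ≤ A*C := by
      have habc : 0 < a^2*b^2*c^2 := by positivity
      rw [← mul_le_mul_iff_left₀ habc]
      have e : C * (a^2*b^2*c^2) = a^2*b^2+b^2*c^2+c^2*a^2 := by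
        rw [hC]; field_simp; ring
      have expand : A*C*(a^2*b^2*c^2) = (a^2+b^2+c^2)*(a^2*b^2+b^2*c^2+c^2*a^2) := by
        calc A*C*(a^2*b^2*c^2) = A * (C*(a^2*b^2*c^2)) := by ring
          _ = _ := by rw [e, hA]
      rw [expand]
      nlinarith [mul_nonneg (sq_nonneg (a^2-b^2)) (sq_nonneg c),
        mul_nonneg (sq_nonneg (b^2-c^2)) (sq_nonneg a),
        mul_nonneg (sq_nonneg (a^2-c^2)) (sq_nonneg b)]
    set p := a * x 0 + b * x 1 + c * x 2 with hp
    set q := x 0 / a + x 1 / b + x 2 / c with hq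
    set n := (x 0)^2 + (x 1)^2 + (x 2)^2 with hn
    have hnpos : 0 < n := by
      have : x 0 ≠ 0 ∨ x 1 ≠ 0 ∨ x 2 ≠ 0 := by
        by_contra h
        push_neg at h
        exact hx (funext fun i => by fin_cases i <;> simp [h.1, h.2.1, h.2.2])
      rw [hn]
      rcases this with h | h | h <;> positivity
    have key : x 0 * (4 * x 0 + (a / b + b / a) * x 1 + (a / c + c / a) * x 2) +
          x 1 * ((b / a + a / b) * x 0 + 4 * x 1 + (b / c + c / b) * x 2) +
        x 2 * ((c / a + a / c) * x 0 + (c / b + b / c) * x 1 + 4 * x 2)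
        = 2*n + 2*(p*q) := by
      rw [hn, hp, hq]; field_simp; ring
    rw [key]
    set sA := Real.sqrt A with hsA
    set sC := Real.sqrt C with hsC
    have hsA2 : sA^2 = A := Real.sq_sqrt hApos.le
    have hsC2 : sC^2 = C := Real.sq_sqrt hCpos.le
    have hsApos : 0 < sA := Real.sqrt_pos.2 hApos
    have hsCpos : 0 < sC := Real.sqrt_pos.2 hCpos
    set m := sA * sC with hm
    have hm2 : m^2 = A*C := by rw [hm, mul_pow, hsA2, hsC2]
    have hm0 : 0 < m := mul_pos hsApos hsCpos
    have hm3 : 3 ≤ m := by nlinarith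
    have hm5 : m < 5 := by nlinarith
    -- Cauchy-Schwarz with w_i = sC*d_i - sA/d_i
    have hCS : (sC*p - sA*q)^2 ≤ (2*m^2 - 6*m)*n := by
      have h1 := cs3 (sC*a - sA/a) (sC*b - sA/b) (sC*c - sA/c) (x 0) (x 1) (x 2)
      have e1 : (sC*a - sA/a)*(x 0) + (sC*b - sA/b)*(x 1) + (sC*c - sA/c)*(x 2)
          = sC*p - sA*q := by rw [hp, hq]; field_simp; ring
      have e2 : (sC*a - sA/a)^2 + (sC*b - sA/b)^2 + (sC*c - sA/c)^2
          = 2*m^2 - 6*m := by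
        have : (sC*a - sA/a)^2 + (sC*b - sA/b)^2 + (sC*c - sA/c)^2
            = sC^2*(a^2+b^2+c^2) + sA^2*(1/a^2+1/b^2+1/c^2) - 6*(sA*sC) := by
          field_simp; ring
        rw [this, hsA2, hsC2, ← hA, ← hC, ← hm, hm2]; ring
      rw [e1, e2] at h1
      exact h1
    exact final_step n p q sA sC m hnpos hm hm3 hm5 hCS
end

section
/- Let B be the symmetric 3×3 matrix with Bᵢᵢ = 4 and Bᵢⱼ = bᵢ/bⱼ + bⱼ/bᵢ for i ≠ j, where b₁, b₂, b₃ > 0. Then the minimal eigenvalue of B is 5 − (Σ_{j,k=1}^{3} bⱼ²/bₖ²)^{1/2}. -/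
/-- The minimal eigenvalue formula of Bramble–Pasciak–Steinbach. -/
theorem stmt_3 (b : Fin 3 → ℝ) (hb : ∀ i, 0 < b i)
    (B : Matrix (Fin 3) (Fin 3) ℝ)
    (hB : B = Matrix.of fun i j : Fin 3 =>
      if i = j then (4 : ℝ) else b i / b j + b j / b i)
    (hHerm : B.IsHermitian) :
    (⨅ i, hHerm.eigenvalues i)
      = 5 - Real.sqrt (∑ j : Fin 3, ∑ k : Fin 3, (b j) ^ 2 / (b k) ^ 2) := by
  have h0 := hb 0
  have h1 := hb 1
  have h2 := hb 2
  set T : ℝ := ∑ j : Fin 3, ∑ k : Fin 3, (b j) ^ 2 / (b k) ^ 2 with hT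
  set s : ℝ := Real.sqrt T with hs
  have hTnn : 0 ≤ T := by positivity
  have hs2 : s ^ 2 = T := Real.sq_sqrt hTnn
  -- T ≥ 9
  have key : ∀ x y : ℝ, 0 < x → 0 < y → 2 ≤ x ^ 2 / y ^ 2 + y ^ 2 / x ^ 2 := by
    intro x y hx hy
    rw [div_add_div _ _ (by positivity) (by positivity), le_div_iff₀ (by positivity)]
    nlinarith [sq_nonneg (x ^ 2 - y ^ 2)]
  have hT9 : (9 : ℝ) ≤ T := by
    have k01 := key (b 0) (b 1) h0 h1
    have k02 := key (b 0) (b 2) h0 h2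
    have k12 := key (b 1) (b 2) h1 h2
    have e0 : (b 0) ^ 2 / (b 0) ^ 2 = 1 := div_self (by positivity)
    have e1 : (b 1) ^ 2 / (b 1) ^ 2 = 1 := div_self (by positivity)
    have e2 : (b 2) ^ 2 / (b 2) ^ 2 = 1 := div_self (by positivity)
    rw [hT]
    simp only [Fin.sum_univ_three]
    rw [e0, e1, e2]
    linarith
  have hs3 : (3 : ℝ) ≤ s := by
    rw [hs, show (3 : ℝ) = Real.sqrt 9 by
      rw [show (9 : ℝ) = 3 ^ 2 by norm_num, Real.sqrt_sq (by norm_num)]]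
    exact Real.sqrt_le_sqrt hT9
  -- determinant identity
  have hdet : ∀ lam : ℝ, (B - lam • 1).det
      = (2 - lam) * ((5 - s - lam) * (5 + s - lam)) := by
    intro lam
    have hne0 := h0.ne'
    have hne1 := h1.ne'
    have hne2 := h2.ne'
    have expand : (B - lam • 1).det = (2 - lam) * ((5 - lam) ^ 2 - T) := by
      rw [hB, Matrix.det_fin_three]
      simp [Matrix.one_apply, hT, Fin.sum_univ_three]
      field_simp
      ring
    rw [expand, ← hs2]; ring
  -- every eigenvalue is 2, 5 - s, or 5 + s
  have hmem : ∀ i, hHerm.eigenvalues i = 2 ∨ hHerm.eigenvalues i = 5 - s ∨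
      hHerm.eigenvalues i = 5 + s := by
    intro i
    set lam := hHerm.eigenvalues i with hlam
    have hv : (B - lam • 1).mulVec ⇑(hHerm.eigenvectorBasis i) = 0 := by
      rw [Matrix.sub_mulVec, hHerm.mulVec_eigenvectorBasis, Matrix.smul_mulVec,
        Matrix.one_mulVec, sub_self]
    have hvne : ⇑(hHerm.eigenvectorBasis i) ≠ (0 : Fin 3 → ℝ) :=
      (WithLp.ofLp_eq_zero 2).not.mpr (hHerm.eigenvectorBasis.orthonormal.ne_zero i)
    have hdet0 : (B - lam • 1).det = 0 :=
      Matrix.exists_mulVec_eq_zero_iff.mp ⟨_, hvne, hv⟩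
    rw [hdet lam] at hdet0
    rcases mul_eq_zero.mp hdet0 with h | h
    · left; linarith
    · rcases mul_eq_zero.mp h with h | h
      · right; left; linarith
      · right; right; linarith
  -- trace: sum of eigenvalues = 12
  have htrace : hHerm.eigenvalues 0 + hHerm.eigenvalues 1 + hHerm.eigenvalues 2 = 12 := by
    have hst := hHerm.spectral_theorem
    have : B.trace = (Matrix.diagonal (RCLike.ofReal ∘ hHerm.eigenvalues)).trace := by
      conv_lhs => rw [hst]
      rw [Unitary.conjStarAlgAut_apply, Matrix.trace_mul_cycle]
      rw [show (star (hHerm.eigenvectorUnitary : Matrix (Fin 3) (Fin 3) ℝ)) *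
          (hHerm.eigenvectorUnitary : Matrix (Fin 3) (Fin 3) ℝ) = 1 from
        Matrix.mem_unitaryGroup_iff'.mp hHerm.eigenvectorUnitary.2, one_mul]
    rw [Matrix.trace_diagonal] at this
    have hBtr : B.trace = 12 := by
      rw [hB, Matrix.trace]
      simp [Matrix.diag, Fin.sum_univ_three]
      norm_num
    rw [hBtr] at this
    simp only [Function.comp, RCLike.ofReal_real_eq_id, id, Fin.sum_univ_three] at this
    linarith [this]
  -- some eigenvalue equals 5 - s
  have hexists : ∃ i, hHerm.eigenvalues i = 5 - s := by
    rcases hmem 0 with ha | ha | ha <;> rcases hmem 1 with hc | hc | hc <;>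
      rcases hmem 2 with hd | hd | hd <;>
      first
      | exact ⟨0, by linarith⟩
      | exact ⟨1, by linarith⟩
      | exact ⟨2, by linarith⟩
      | (exfalso; rw [ha, hc, hd] at htrace; linarith)
  -- conclude
  obtain ⟨i0, hi0⟩ := hexists
  have hlb : ∀ i, 5 - s ≤ hHerm.eigenvalues i := by
    intro i
    rcases hmem i with h | h | h <;> rw [h] <;> linarith
  apply le_antisymm
  · exact ciInf_le (Finite.bddBelow_range _) i0 |>.trans_eq hi0
  · exact le_ciInf hlb
end
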